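/- Noisy matrix recovery error bound: Suppose X ∈ R^{N1×N2} is s-sparse, U1, U2 satisfy RIP_{2s} with constant δ_{2s} ∈ (0, √2 − 1), and Y' = U1 X U2^T + E with ||E||_F ≤ ε. If recovery is performed columnwise by relaxed ℓ1-minimization (first recovering columns of X U2^T with tolerance ε, then rows of X with tolerance √m2 · C2 · ε), then the recovered matrix X̂ satisfies ||X̂ − X||_F ≤ √(m2 N1) · C2^2 · ε, where C2 = 4√(1+δ_{2s}) / (1 − (1+√2)δ_{2s}). -/

import Mathlib

/-- A vector is `s`-sparse if it has at most `s` nonzero entries. -/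
def SparseVec {n : ℕ} (s : ℕ) (x : Fin n → ℝ) : Prop :=
  (Finset.univ.filter fun i => x i ≠ 0).card ≤ s

/-- A matrix is `s`-sparse if it has at most `s` nonzero entries in total. -/
def SparseMat {n1 n2 : ℕ} (s : ℕ) (X : Matrix (Fin n1) (Fin n2) ℝ) : Prop :=
  (Finset.univ.filter fun p : Fin n1 × Fin n2 => X p.1 p.2 ≠ 0).card ≤ s

/-- Euclidean (ℓ2) norm of a vector. -/
noncomputable def l2 {n : ℕ} (v : Fin n → ℝ) : ℝ := Real.sqrt (∑ i, (v i) ^ 2)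

/-- Frobenius norm of a matrix. -/
noncomputable def frob {m n : ℕ} (A : Matrix (Fin m) (Fin n) ℝ) : ℝ :=
  Real.sqrt (∑ i, ∑ j, (A i j) ^ 2)

/-- The restricted isometry property of order `s` with constant `δ`. -/
def RIP {m n : ℕ} (s : ℕ) (δ : ℝ) (A : Matrix (Fin m) (Fin n) ℝ) : Prop :=
  ∀ x : Fin n → ℝ, SparseVec s x →
    (1 - δ) * l2 x ≤ l2 (A.mulVec x) ∧ l2 (A.mulVec x) ≤ (1 + δ) * l2 x

lemma l2_nonneg' {n : ℕ} (v : Fin n → ℝ) : 0 ≤ l2 v := Real.sqrt_nonneg _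

lemma l2_sq' {n : ℕ} (v : Fin n → ℝ) : l2 v ^ 2 = ∑ i, v i ^ 2 :=
  Real.sq_sqrt (Finset.sum_nonneg fun i _ => sq_nonneg _)

lemma l2_col_le_frob {m n : ℕ} (M : Matrix (Fin m) (Fin n) ℝ) (q : Fin n) :
    l2 (fun i => M i q) ≤ frob M := by
  apply Real.sqrt_le_sqrt
  apply Finset.sum_le_sum
  intro i _
  exact Finset.single_le_sum (fun j _ => sq_nonneg (M i j)) (Finset.mem_univ q)

lemma l2_row_le_frob {m n : ℕ} (M : Matrix (Fin m) (Fin n) ℝ) (p : Fin m) :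
    l2 (fun j => M p j) ≤ frob M := by
  apply Real.sqrt_le_sqrt
  exact Finset.single_le_sum
    (fun i _ => Finset.sum_nonneg fun j _ => sq_nonneg (M i j)) (Finset.mem_univ p)

lemma frob_le_of_col {m n : ℕ} (M : Matrix (Fin m) (Fin n) ℝ) (c : ℝ) (hc : 0 ≤ c)
    (h : ∀ q, l2 (fun i => M i q) ≤ c) : frob M ≤ Real.sqrt n * c := by
  have h1 : frob M ≤ Real.sqrt (n * c ^ 2) := by
    apply Real.sqrt_le_sqrt
    rw [Finset.sum_comm]
    calc ∑ q, ∑ i, (M i q) ^ 2 = ∑ q : Fin n, (l2 fun i => M i q) ^ 2 :=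
          Finset.sum_congr rfl fun q _ => (l2_sq' _).symm
      _ ≤ ∑ _q : Fin n, c ^ 2 :=
          Finset.sum_le_sum fun q _ => pow_le_pow_left₀ (l2_nonneg' _) (h q) 2
      _ = n * c ^ 2 := by simp
  calc frob M ≤ Real.sqrt (n * c ^ 2) := h1
    _ = Real.sqrt n * c := by
        rw [Real.sqrt_mul (by positivity), Real.sqrt_sq hc]

lemma frob_le_of_row {m n : ℕ} (M : Matrix (Fin m) (Fin n) ℝ) (c : ℝ) (hc : 0 ≤ c)
    (h : ∀ p, l2 (fun j => M p j) ≤ c) : frob M ≤ Real.sqrt m * c := by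
  have h1 : frob M ≤ Real.sqrt (m * c ^ 2) := by
    apply Real.sqrt_le_sqrt
    calc ∑ p, ∑ j, (M p j) ^ 2 = ∑ p : Fin m, (l2 fun j => M p j) ^ 2 :=
          Finset.sum_congr rfl fun p _ => (l2_sq' _).symm
      _ ≤ ∑ _p : Fin m, c ^ 2 :=
          Finset.sum_le_sum fun p _ => pow_le_pow_left₀ (l2_nonneg' _) (h p) 2
      _ = m * c ^ 2 := by simp
  calc frob M ≤ Real.sqrt (m * c ^ 2) := h1
    _ = Real.sqrt m * c := by
        rw [Real.sqrt_mul (by positivity), Real.sqrt_sq hc]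

/-- Noisy matrix recovery error bound for serial relaxed ℓ1-minimization:
with `X` `s`-sparse, `U1, U2` satisfying RIP of order `2s` with constant
`δ ∈ (0, √2 - 1)`, noisy measurements `Y' = U1 X U2ᵀ + E`, `‖E‖_F ≤ ε`, and the basic
noisy compressive sensing bound assumed as a hypothesis, the two-stage columnwise/
rowwise relaxed ℓ1 recovery `X̂` satisfies `‖X̂ - X‖_F ≤ √(m2 N1) C2² ε` where
`C2 = 4√(1+δ)/(1-(1+√2)δ)`. -/
theorem noisy_matrix_recovery_bound {N1 N2 m1 m2 s : ℕ} {δ ε C2 : ℝ}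
    (hδ0 : 0 < δ) (hδ : δ < Real.sqrt 2 - 1)
    (hC2 : C2 = 4 * Real.sqrt (1 + δ) / (1 - (1 + Real.sqrt 2) * δ))
    (X : Matrix (Fin N1) (Fin N2) ℝ) (hX : SparseMat s X)
    (U1 : Matrix (Fin m1) (Fin N1) ℝ) (U2 : Matrix (Fin m2) (Fin N2) ℝ)
    (hU1 : RIP (2 * s) δ U1) (hU2 : RIP (2 * s) δ U2)
    (E : Matrix (Fin m1) (Fin m2) ℝ) (hE : frob E ≤ ε)
    (Y' : Matrix (Fin m1) (Fin m2) ℝ) (hY' : Y' = U1 * X * U2.transpose + E)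
    -- the basic noisy CS recovery result, assumed as a hypothesis:
    (hCS : ∀ (m n : ℕ) (A : Matrix (Fin m) (Fin n) ℝ), RIP (2 * s) δ A →
      ∀ (x f : Fin n → ℝ) (y : Fin m → ℝ) (ε' : ℝ),
        SparseVec s x → l2 (A.mulVec x - y) ≤ ε' →
        l2 (A.mulVec f - y) ≤ ε' →
        (∀ g : Fin n → ℝ, l2 (A.mulVec g - y) ≤ ε' → ∑ i, |f i| ≤ ∑ i, |g i|) →
        l2 (f - x) ≤ C2 * ε')
    -- first stage: columns of `Z` are relaxed ℓ1-minimizers with tolerance ε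
    (Z : Matrix (Fin N1) (Fin m2) ℝ)
    (hZfeas : ∀ q, l2 (U1.mulVec (fun i => Z i q) - fun p => Y' p q) ≤ ε)
    (hZmin : ∀ q, ∀ g : Fin N1 → ℝ,
      l2 (U1.mulVec g - fun p => Y' p q) ≤ ε → ∑ i, |Z i q| ≤ ∑ i, |g i|)
    -- second stage: rows of `X̂` are relaxed ℓ1-minimizers with tolerance √m2·C2·ε
    (Xhat : Matrix (Fin N1) (Fin N2) ℝ)
    (hXfeas : ∀ p, l2 (U2.mulVec (fun j => Xhat p j) - fun q => Z p q) ≤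
      Real.sqrt m2 * C2 * ε)
    (hXmin : ∀ p, ∀ g : Fin N2 → ℝ,
      l2 (U2.mulVec g - fun q => Z p q) ≤ Real.sqrt m2 * C2 * ε →
      ∑ j, |Xhat p j| ≤ ∑ j, |g j|) :
    frob (Xhat - X) ≤ Real.sqrt ((m2 : ℝ) * (N1 : ℝ)) * C2 ^ 2 * ε := by
  have hε0 : 0 ≤ ε := le_trans (Real.sqrt_nonneg _) hE
  have hs2 : Real.sqrt 2 ^ 2 = 2 := Real.sq_sqrt (by norm_num)
  have hs2nn : (0:ℝ) ≤ Real.sqrt 2 := Real.sqrt_nonneg 2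
  have hden : 0 < 1 - (1 + Real.sqrt 2) * δ := by nlinarith
  have hC2nn : 0 ≤ C2 := by
    rw [hC2]
    exact div_nonneg (by positivity) hden.le
  set B : Matrix (Fin N1) (Fin m2) ℝ := X * U2.transpose with hBdef
  -- sparsity of rows of X
  have hrow_sparse : ∀ p, SparseVec s (fun j => X p j) := by
    intro p
    unfold SparseVec
    refine le_trans (Finset.card_le_card_of_injOn (fun j => (p, j)) ?_ ?_) hX
    · intro j hj
      simp only [Finset.mem_coe, Finset.mem_filter, Finset.mem_univ, true_and] at hj ⊢
      exact hj
    · intro a _ b _ h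
      simpa using h
  -- sparsity of columns of B
  have hcol_sparse : ∀ q, SparseVec s (fun i => B i q) := by
    intro q
    unfold SparseVec
    have hsub : (Finset.univ.filter fun i : Fin N1 => (fun i => B i q) i ≠ 0) ⊆
        (Finset.univ.filter fun pr : Fin N1 × Fin N2 => X pr.1 pr.2 ≠ 0).image Prod.fst := by
      intro i hi
      simp only [Finset.mem_filter, Finset.mem_univ, true_and] at hi
      have hi' : ∑ j, X i j * U2.transpose j q ≠ 0 := by
        rwa [hBdef, Matrix.mul_apply] at hi
      obtain ⟨j, _, hj⟩ := Finset.exists_ne_zero_of_sum_ne_zero hi'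
      simp only [Finset.mem_image, Finset.mem_filter, Finset.mem_univ, true_and]
      exact ⟨(i, j), left_ne_zero_of_mul hj, rfl⟩
    calc (Finset.univ.filter fun i : Fin N1 => (fun i => B i q) i ≠ 0).card
        ≤ _ := Finset.card_le_card hsub
      _ ≤ _ := Finset.card_image_le
      _ ≤ s := hX
  -- stage 1
  have stage1 : ∀ q, l2 ((fun i => Z i q) - fun i => B i q) ≤ C2 * ε := by
    intro q
    refine hCS m1 N1 U1 hU1 (fun i => B i q) (fun i => Z i q) (fun p => Y' p q) ε
      (hcol_sparse q) ?_ (hZfeas q) (hZmin q)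
    have heq : (U1.mulVec (fun i => B i q) - fun p => Y' p q) = fun p => -(E p q) := by
      funext p
      have h1 : U1.mulVec (fun i => B i q) p = (U1 * B) p q := by
        simp [Matrix.mulVec, Matrix.mul_apply, dotProduct]
      rw [Pi.sub_apply, h1]
      simp only [Pi.sub_apply, h1, hY', Matrix.add_apply, hBdef, ← Matrix.mul_assoc]
      ring
    rw [heq]
    calc l2 (fun p => -(E p q)) = l2 (fun p => E p q) := by
          unfold l2; congr 1; exact Finset.sum_congr rfl fun p _ => by ring
      _ ≤ frob E := l2_col_le_frob E q
      _ ≤ ε := hE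
  -- aggregate stage 1 into a Frobenius bound
  have hZB : frob (Z - B) ≤ Real.sqrt m2 * (C2 * ε) := by
    refine frob_le_of_col _ _ (mul_nonneg hC2nn hε0) fun q => ?_
    have : (fun i => (Z - B) i q) = ((fun i => Z i q) - fun i => B i q) := by
      funext i; simp [Matrix.sub_apply]
    rw [this]
    exact stage1 q
  -- stage 2
  have stage2 : ∀ p, l2 ((fun j => Xhat p j) - fun j => X p j) ≤
      C2 * (Real.sqrt m2 * C2 * ε) := by
    intro p
    refine hCS m2 N2 U2 hU2 (fun j => X p j) (fun j => Xhat p j) (fun q => Z p q)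
      (Real.sqrt m2 * C2 * ε) (hrow_sparse p) ?_ (hXfeas p) (hXmin p)
    have heq : (U2.mulVec (fun j => X p j) - fun q => Z p q) =
        fun q => -((Z - B) p q) := by
      funext q
      have h1 : U2.mulVec (fun j => X p j) q = B p q := by
        rw [hBdef]
        simp [Matrix.mulVec, Matrix.mul_apply, dotProduct, mul_comm]
      simp [Pi.sub_apply, h1, Matrix.sub_apply]
    rw [heq]
    calc l2 (fun q => -((Z - B) p q)) = l2 (fun q => (Z - B) p q) := by
          unfold l2; congr 1; exact Finset.sum_congr rfl fun q _ => by ring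
      _ ≤ frob (Z - B) := l2_row_le_frob _ p
      _ ≤ Real.sqrt m2 * (C2 * ε) := hZB
      _ = Real.sqrt m2 * C2 * ε := by ring
  -- aggregate stage 2
  have hfinal : frob (Xhat - X) ≤ Real.sqrt N1 * (C2 * (Real.sqrt m2 * C2 * ε)) := by
    refine frob_le_of_row _ _ (by positivity) fun p => ?_
    have : (fun j => (Xhat - X) p j) = ((fun j => Xhat p j) - fun j => X p j) := by
      funext j; simp [Matrix.sub_apply]
    rw [this]
    exact stage2 p
  calc frob (Xhat - X) ≤ Real.sqrt N1 * (C2 * (Real.sqrt m2 * C2 * ε)) := hfinal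
    _ = Real.sqrt ((m2 : ℝ) * (N1 : ℝ)) * C2 ^ 2 * ε := by
        rw [Real.sqrt_mul (by positivity)]
        ring
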